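/- (Full high-energy expansion of the coefficient vector q, d=3; formula (4.21), refining Theorem 3.4 for d=3.) For every M ∈ ℕ there exist constants C > 0 and κ₀ > 0 such that for all κ ≥ κ₀ the matrix A(κ) is invertible and for all k ∈ ℝ³ with |k| = κ and all j ∈ {1,…,n} one has |q_j(k) + 4πi κ^{−1} Σ_{m=0}^M (−4πi)^m κ^{−m} Σ_{j'=1}^n [W(κ)^m]_{jj'} e^{i k·y_{j'}}| ≤ C κ^{−M−2}. In particular q_j(k) = −4πi κ^{−1} e^{ik·y_j} − 16π² κ^{−2} ( α_j e^{ik·y_j} − Σ_{j'≠j} e^{iκ|y_j−y_{j'}|} e^{ik·y_{j'}}/(4π|y_j−y_{j'}|) ) + O(κ^{−3}) as κ → +∞. -/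

import Mathlib

open Complex Finset Matrix

noncomputable section

/-- The matrix `A(κ)` for a three-dimensional multipoint potential:
`A(κ)_{jj} = α_j - iκ/(4π)`,
`A(κ)_{jj'} = -e^{iκ‖y_j - y_{j'}‖}/(4π‖y_j - y_{j'}‖)` for `j ≠ j'`. -/
def A3 (n : ℕ) (y : Fin n → EuclideanSpace ℝ (Fin 3)) (α : Fin n → ℂ) (κ : ℝ) :
    Matrix (Fin n) (Fin n) ℂ :=
  fun j j' =>
    if j = j' then α j - Complex.I * κ / (4 * Real.pi)
    else -Complex.exp (Complex.I * κ * ‖y j - y j'‖) / (4 * Real.pi * ‖y j - y j'‖)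

/-- `q(k) = A(κ)⁻¹ b(k)` with `b(k)_j = -e^{i k·y_j}`. -/
def q3 (n : ℕ) (y : Fin n → EuclideanSpace ℝ (Fin 3)) (α : Fin n → ℂ) (κ : ℝ)
    (k : EuclideanSpace ℝ (Fin 3)) : Fin n → ℂ :=
  (A3 n y α κ)⁻¹ *ᵥ fun j => -Complex.exp (Complex.I * (inner ℝ k (y j) : ℝ))

/-- The scattering amplitude `f(k,ℓ) = (2π)⁻³ Σ_j q_j(k) e^{-iℓ·y_j}`. -/
def f3 (n : ℕ) (y : Fin n → EuclideanSpace ℝ (Fin 3)) (α : Fin n → ℂ) (κ : ℝ)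
    (k ℓ : EuclideanSpace ℝ (Fin 3)) : ℂ :=
  ((2 * Real.pi : ℂ) ^ 3)⁻¹ *
    ∑ j, q3 n y α κ k j * Complex.exp (-Complex.I * (inner ℝ ℓ (y j) : ℝ))

/-- The matrix `W(κ)`: `W(κ)_{jj} = α_j`,
`W(κ)_{jj'} = -e^{iκ‖y_j - y_{j'}‖}/(4π‖y_j - y_{j'}‖)` for `j ≠ j'`. -/
def W3 (n : ℕ) (y : Fin n → EuclideanSpace ℝ (Fin 3)) (α : Fin n → ℂ) (κ : ℝ) :
    Matrix (Fin n) (Fin n) ℂ :=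
  fun j j' =>
    if j = j' then α j
    else -Complex.exp (Complex.I * κ * ‖y j - y j'‖) / (4 * Real.pi * ‖y j - y j'‖)

/-- The coefficients `C_m(k,ℓ) = Σ_{j,j'} [W(κ)^m]_{jj'} e^{i(k·y_{j'} - ℓ·y_j)}`. -/
def C3coef (n : ℕ) (y : Fin n → EuclideanSpace ℝ (Fin 3)) (α : Fin n → ℂ) (κ : ℝ)
    (m : ℕ) (k ℓ : EuclideanSpace ℝ (Fin 3)) : ℂ :=
  ∑ j, ∑ j', (W3 n y α κ ^ m) j j' *
    Complex.exp (Complex.I * ((inner ℝ k (y j') : ℝ) - (inner ℝ ℓ (y j) : ℝ)))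

attribute [local instance] Matrix.linftyOpNormedAddCommGroup Matrix.linftyOpNormedRing
  Matrix.linftyOpNormedAlgebra

lemma abs_exp_I_mul_mul_real (s t : ℝ) : ‖Complex.exp (Complex.I * s * t)‖ = 1 := by
  rw [Complex.norm_exp]
  simp [Complex.mul_re, Complex.mul_im]

lemma abs_exp_I_mul_real (t : ℝ) : ‖Complex.exp (Complex.I * t)‖ = 1 := by
  rw [Complex.norm_exp]
  simp [Complex.mul_re, Complex.mul_im]

lemma W3_entry_nnnorm (n y α) (κ : ℝ) (j j' : Fin n) :
    ‖W3 n y α κ j j'‖₊ = ‖W3 n y α 0 j j'‖₊ := by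
  apply NNReal.coe_injective
  rw [coe_nnnorm, coe_nnnorm]
  unfold W3
  by_cases h : j = j' <;>
    simp [h, norm_div, norm_neg, abs_exp_I_mul_mul_real]

lemma W3_norm_eq (n y α) (κ : ℝ) : ‖W3 n y α κ‖ = ‖W3 n y α 0‖ := by
  rw [Matrix.linfty_opNorm_def, Matrix.linfty_opNorm_def]
  congr 1
  exact Finset.sup_congr rfl fun i _ =>
    Finset.sum_congr rfl fun j _ => W3_entry_nnnorm n y α κ i j

lemma scal_eq (κ : ℝ) (hκ : κ ≠ 0) :
    (-(Complex.I*κ)/(4*Real.pi)) * (-(4*(Real.pi:ℂ)*Complex.I)/κ) = -1 := by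
  have hπ : (Real.pi : ℂ) ≠ 0 := Complex.ofReal_ne_zero.2 Real.pi_ne_zero
  have hκ' : (κ : ℂ) ≠ 0 := Complex.ofReal_ne_zero.2 hκ
  field_simp
  ring_nf
  rw [Complex.I_sq]

lemma A3_eq (n y α) (κ : ℝ) (hκ : κ ≠ 0) :
    A3 n y α κ = (-(Complex.I*κ)/(4*Real.pi)) •
      ((1 : Matrix (Fin n) (Fin n) ℂ) - (-(4*(Real.pi:ℂ)*Complex.I)/κ) • W3 n y α κ) := by
  ext j j'
  have hπ : (Real.pi : ℂ) ≠ 0 := Complex.ofReal_ne_zero.2 Real.pi_ne_zero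
  have hκ' : (κ : ℂ) ≠ 0 := Complex.ofReal_ne_zero.2 hκ
  have hs := scal_eq κ hκ
  by_cases h : j = j' <;>
    simp only [A3, W3, h, if_true, if_false, Matrix.smul_apply, Matrix.sub_apply,
      Matrix.one_apply_eq, Matrix.one_apply_ne, Ne, not_false_iff, smul_eq_mul]
  · field_simp
    ring_nf
    rw [Complex.I_sq]
    ring
  · linear_combination (-(cexp (Complex.I * κ * ‖y j - y j'‖) /
      (4 * (Real.pi:ℂ) * ‖y j - y j'‖))) * hs

lemma key (n : ℕ) (y : Fin n → EuclideanSpace ℝ (Fin 3)) (α : Fin n → ℂ) (M : ℕ) :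
    ∃ C > (0 : ℝ), ∃ κ₀ > (0 : ℝ), ∀ κ ≥ κ₀, IsUnit (A3 n y α κ) ∧
      ∀ k : EuclideanSpace ℝ (Fin 3), ‖k‖ = κ → ∀ j : Fin n,
        ‖q3 n y α κ k j +
            4 * (Real.pi : ℂ) * Complex.I / (κ : ℂ) *
              ∑ m ∈ Finset.range (M + 1),
                (-4 * (Real.pi : ℂ) * Complex.I) ^ m / (κ : ℂ) ^ m *
                  ∑ j' : Fin n, (W3 n y α κ ^ m) j j' *
                    Complex.exp (Complex.I * (inner ℝ k (y j') : ℝ))‖ ≤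
          C / κ ^ (M + 2) := by
  set B := ‖W3 n y α 0‖ with hB
  have hB0 : 0 ≤ B := norm_nonneg _
  have hπ : (Real.pi : ℂ) ≠ 0 := Complex.ofReal_ne_zero.2 Real.pi_ne_zero
  refine ⟨8 * Real.pi * (4 * Real.pi * B) ^ (M + 1) + 1, by positivity,
    max 1 (8 * Real.pi * (B + 1)), lt_of_lt_of_le one_pos (le_max_left _ _), ?_⟩
  intro κ hκ
  have hκ1 : (1 : ℝ) ≤ κ := le_trans (le_max_left _ _) hκ
  have hκpos : (0 : ℝ) < κ := lt_of_lt_of_le one_pos hκ1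
  have hκ0 : κ ≠ 0 := ne_of_gt hκpos
  have hκ' : (κ : ℂ) ≠ 0 := Complex.ofReal_ne_zero.2 hκ0
  set c : ℂ := -(Complex.I*κ)/(4*Real.pi) with hc_def
  set z : ℂ := -(4*(Real.pi:ℂ)*Complex.I)/κ with hz_def
  set x : Matrix (Fin n) (Fin n) ℂ := z • W3 n y α κ with hx_def
  have hc : c ≠ 0 := by
    apply div_ne_zero
    · exact neg_ne_zero.2 (mul_ne_zero Complex.I_ne_zero hκ')
    · norm_num
  have hznorm : ‖z‖ = 4 * Real.pi / κ := by
    rw [hz_def, norm_div, norm_neg]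
    simp [_root_.map_mul,
      abs_of_pos Real.pi_pos, abs_of_pos hκpos]
  have hxnorm : ‖x‖ ≤ 4 * Real.pi * B / κ := by
    rw [hx_def, norm_smul, hznorm, W3_norm_eq, ← hB]
    rw [div_mul_eq_mul_div]
  have hxhalf : ‖x‖ ≤ 1 / 2 := by
    refine le_trans hxnorm ?_
    rw [div_le_div_iff₀ hκpos (by norm_num : (0:ℝ) < 2)]
    have h8 : 8 * Real.pi * (B + 1) ≤ κ := le_trans (le_max_right _ _) hκ
    nlinarith [Real.pi_pos]
  have hx1 : ‖x‖ < 1 := lt_of_le_of_lt hxhalf (by norm_num)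
  have hAeq : A3 n y α κ = c • (1 - x) := A3_eq n y α κ hκ0
  have h1x : IsUnit ((1 : Matrix (Fin n) (Fin n) ℂ) - x) := isUnit_one_sub_of_norm_lt_one hx1
  have hUnit : IsUnit (A3 n y α κ) := by
    rw [hAeq]
    simpa [Units.smul_def] using h1x.smul (Units.mk0 c hc)
  refine ⟨hUnit, ?_⟩
  intro k _ j
  set e : Fin n → ℂ := fun j' => Complex.exp (Complex.I * (inner ℝ k (y j') : ℝ)) with he
  set b : Fin n → ℂ := fun j' => -e j' with hb_def
  set Ai : Matrix (Fin n) (Fin n) ℂ := Ring.inverse (A3 n y α κ) with hAi_def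
  have hAi1 : Ai * A3 n y α κ = 1 := Ring.inverse_mul_cancel _ hUnit
  have hAi2 : A3 n y α κ * Ai = 1 := Ring.mul_inverse_cancel _ hUnit
  set S : Matrix (Fin n) (Fin n) ℂ := ∑ m ∈ Finset.range (M + 1), x ^ m with hS
  have hgeo : (1 - x) * S = 1 - x ^ (M + 1) := by
    have h := geom_sum_mul x (M + 1)
    have h2 : x * S = S * x := by
      rw [hS, Finset.sum_mul, Finset.mul_sum]
      exact Finset.sum_congr rfl fun m _ => (pow_mul_comm' x m).symm
    calc (1 - x) * S = S - x * S := by rw [sub_mul, one_mul]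
      _ = S - S * x := by rw [h2]
      _ = -(S * (x - 1)) := by rw [mul_sub, mul_one]; abel
      _ = -(x ^ (M+1) - 1) := by rw [h]
      _ = 1 - x ^ (M + 1) := by abel
  have hT : A3 n y α κ * (c⁻¹ • S) = 1 - x ^ (M + 1) := by
    rw [hAeq, smul_mul_smul_comm, mul_inv_cancel₀ hc, one_smul, hgeo]
  have hAiT : c⁻¹ • S = Ai - Ai * x ^ (M + 1) := by
    calc c⁻¹ • S = Ai * (A3 n y α κ * (c⁻¹ • S)) := by
          rw [← mul_assoc, hAi1, one_mul]
      _ = Ai * (1 - x ^ (M + 1)) := by rw [hT]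
      _ = Ai - Ai * x ^ (M + 1) := by rw [mul_sub, mul_one]
  have hAidec : Ai = c⁻¹ • S + Ai * x ^ (M + 1) := by rw [hAiT]; abel
  have hq : q3 n y α κ k = (c⁻¹ • S) *ᵥ b + Ai *ᵥ (x ^ (M + 1) *ᵥ b) := by
    rw [q3, Matrix.nonsing_inv_eq_ringInverse, ← hAi_def]
    have : (fun j' => -Complex.exp (Complex.I * (inner ℝ k (y j') : ℝ))) = b := rfl
    rw [this]
    conv_lhs => rw [hAidec]
    rw [Matrix.add_mulVec, Matrix.mulVec_mulVec]
  have hcinv : c⁻¹ = 4 * (Real.pi : ℂ) * Complex.I / κ := by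
    refine inv_eq_of_mul_eq_one_right ?_
    rw [hc_def]
    field_simp
    ring_nf
    rw [Complex.I_sq]
    ring
  have hcoef : ∀ m : ℕ, c⁻¹ * z ^ m =
      4 * (Real.pi : ℂ) * Complex.I / κ * ((-4 * (Real.pi:ℂ) * Complex.I) ^ m / (κ:ℂ) ^ m) := by
    intro m
    rw [hcinv, hz_def, div_pow]
    ring_nf
  have hSb : ((c⁻¹ • S) *ᵥ b) j =
      -(4 * (Real.pi : ℂ) * Complex.I / (κ : ℂ) *
        ∑ m ∈ Finset.range (M + 1),
          (-4 * (Real.pi : ℂ) * Complex.I) ^ m / (κ : ℂ) ^ m *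
            ∑ j' : Fin n, (W3 n y α κ ^ m) j j' * e j') := by
    have hxm : ∀ m : ℕ, x ^ m = z ^ m • W3 n y α κ ^ m := fun m => smul_pow z _ m
    calc ((c⁻¹ • S) *ᵥ b) j
        = ∑ j', (c⁻¹ * ∑ m ∈ Finset.range (M + 1), z ^ m * (W3 n y α κ ^ m) j j') * b j' := by
          simp only [Matrix.mulVec, dotProduct, Matrix.smul_apply, hS, Matrix.sum_apply,
            smul_eq_mul]
          refine Finset.sum_congr rfl fun j' _ => ?_
          congr 2
          exact Finset.sum_congr rfl fun m _ => by rw [hxm m, Matrix.smul_apply, smul_eq_mul]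
      _ = ∑ m ∈ Finset.range (M + 1), ∑ j', (c⁻¹ * z ^ m) * ((W3 n y α κ ^ m) j j' * b j') := by
          rw [Finset.sum_comm]
          refine Finset.sum_congr rfl fun j' _ => ?_
          rw [Finset.mul_sum, Finset.sum_mul]
          exact Finset.sum_congr rfl fun m _ => by ring
      _ = ∑ m ∈ Finset.range (M + 1),
            -(4 * (Real.pi : ℂ) * Complex.I / (κ : ℂ) *
              ((-4 * (Real.pi : ℂ) * Complex.I) ^ m / (κ : ℂ) ^ m *
                ∑ j' : Fin n, (W3 n y α κ ^ m) j j' * e j')) := by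
          refine Finset.sum_congr rfl fun m _ => ?_
          rw [hcoef m]
          calc ∑ j', (4 * (Real.pi : ℂ) * Complex.I / κ *
                  ((-4 * (Real.pi:ℂ) * Complex.I) ^ m / (κ:ℂ) ^ m)) *
                  ((W3 n y α κ ^ m) j j' * b j')
              = ∑ j', -(4 * (Real.pi : ℂ) * Complex.I / (κ : ℂ) *
                  ((-4 * (Real.pi : ℂ) * Complex.I) ^ m / (κ : ℂ) ^ m *
                    ((W3 n y α κ ^ m) j j' * e j'))) := by
                refine Finset.sum_congr rfl fun j' _ => ?_
                simp only [hb_def]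
                ring
            _ = -(4 * (Real.pi : ℂ) * Complex.I / (κ : ℂ) *
                  ((-4 * (Real.pi : ℂ) * Complex.I) ^ m / (κ : ℂ) ^ m *
                    ∑ j' : Fin n, (W3 n y α κ ^ m) j j' * e j')) := by
                rw [Finset.mul_sum, Finset.mul_sum, Finset.sum_neg_distrib]
      _ = -(4 * (Real.pi : ℂ) * Complex.I / (κ : ℂ) *
            ∑ m ∈ Finset.range (M + 1),
              (-4 * (Real.pi : ℂ) * Complex.I) ^ m / (κ : ℂ) ^ m *
                ∑ j' : Fin n, (W3 n y α κ ^ m) j j' * e j') := by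
          rw [Finset.mul_sum, Finset.sum_neg_distrib]
  -- the remainder representation
  have hqsplit : q3 n y α κ k j +
      4 * (Real.pi : ℂ) * Complex.I / (κ : ℂ) *
        ∑ m ∈ Finset.range (M + 1),
          (-4 * (Real.pi : ℂ) * Complex.I) ^ m / (κ : ℂ) ^ m *
            ∑ j' : Fin n, (W3 n y α κ ^ m) j j' * e j' =
      (Ai *ᵥ (x ^ (M + 1) *ᵥ b)) j := by
    rw [hq]
    simp only [Pi.add_apply]
    rw [hSb]
    ring
  rw [hqsplit]
  -- norm bounds
  have hbnorm : ‖b‖ ≤ 1 := by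
    refine (pi_norm_le_iff_of_nonneg zero_le_one).2 fun i => ?_
    simp only [hb_def, he, norm_neg]
    rw [abs_exp_I_mul_real]
  have hOne : ‖(1 : Matrix (Fin n) (Fin n) ℂ)‖ ≤ 1 := by
    rw [← Matrix.diagonal_one, Matrix.linfty_opNorm_diagonal]
    refine (pi_norm_le_iff_of_nonneg zero_le_one).2 fun i => ?_
    simp
  have hinv2 : ‖Ring.inverse ((1 : Matrix (Fin n) (Fin n) ℂ) - x)‖ ≤ 2 := by
    rw [← geom_series_eq_inverse x hx1]
    have h1 := tsum_geometric_le_of_norm_lt_one x hx1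
    have h2 : (1 - ‖x‖)⁻¹ ≤ 2 := by
      rw [inv_le_comm₀ (by linarith [hxhalf, norm_nonneg x]) (by norm_num)]
      linarith [hxhalf]
    linarith
  have hAiEq : Ai = c⁻¹ • Ring.inverse ((1 : Matrix (Fin n) (Fin n) ℂ) - x) := by
    have h1 : (c⁻¹ • Ring.inverse ((1 : Matrix (Fin n) (Fin n) ℂ) - x)) * A3 n y α κ = 1 := by
      rw [hAeq, smul_mul_smul_comm, inv_mul_cancel₀ hc, one_smul,
        Ring.inverse_mul_cancel _ h1x]
    calc Ai = 1 * Ai := (one_mul _).symm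
      _ = ((c⁻¹ • Ring.inverse ((1 : Matrix (Fin n) (Fin n) ℂ) - x)) * A3 n y α κ) * Ai := by
          rw [h1]
      _ = (c⁻¹ • Ring.inverse ((1 : Matrix (Fin n) (Fin n) ℂ) - x)) * (A3 n y α κ * Ai) :=
          mul_assoc _ _ _
      _ = c⁻¹ • Ring.inverse ((1 : Matrix (Fin n) (Fin n) ℂ) - x) := by rw [hAi2, mul_one]
  have hcnorm : ‖c⁻¹‖ = 4 * Real.pi / κ := by
    rw [hcinv, norm_div]
    simp [_root_.map_mul,
      abs_of_pos Real.pi_pos, abs_of_pos hκpos]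
  have hAinorm : ‖Ai‖ ≤ 8 * Real.pi / κ := by
    rw [hAiEq, norm_smul, hcnorm]
    calc 4 * Real.pi / κ * ‖Ring.inverse ((1 : Matrix (Fin n) (Fin n) ℂ) - x)‖
        ≤ 4 * Real.pi / κ * 2 := by
          apply mul_le_mul_of_nonneg_left hinv2
          positivity
      _ = 8 * Real.pi / κ := by ring
  have hvnorm : ‖x ^ (M + 1) *ᵥ b‖ ≤ (4 * Real.pi * B / κ) ^ (M + 1) := by
    calc ‖x ^ (M + 1) *ᵥ b‖ ≤ ‖x ^ (M + 1)‖ * ‖b‖ := Matrix.linfty_opNorm_mulVec _ _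
      _ ≤ ‖x‖ ^ (M + 1) * 1 := by
          apply mul_le_mul (norm_pow_le' x (Nat.succ_pos M)) hbnorm (norm_nonneg _)
          positivity
      _ = ‖x‖ ^ (M + 1) := mul_one _
      _ ≤ (4 * Real.pi * B / κ) ^ (M + 1) := pow_le_pow_left₀ (norm_nonneg _) hxnorm _
  calc ‖(Ai *ᵥ (x ^ (M + 1) *ᵥ b)) j‖
      ≤ ‖Ai *ᵥ (x ^ (M + 1) *ᵥ b)‖ := norm_le_pi_norm _ j
    _ ≤ ‖Ai‖ * ‖x ^ (M + 1) *ᵥ b‖ := Matrix.linfty_opNorm_mulVec _ _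
    _ ≤ (8 * Real.pi / κ) * (4 * Real.pi * B / κ) ^ (M + 1) := by
        apply mul_le_mul hAinorm hvnorm (norm_nonneg _)
        positivity
    _ = 8 * Real.pi * (4 * Real.pi * B) ^ (M + 1) / κ ^ (M + 2) := by
        rw [div_pow, div_mul_div_comm, pow_succ]
        ring
    _ ≤ (8 * Real.pi * (4 * Real.pi * B) ^ (M + 1) + 1) / κ ^ (M + 2) := by
        apply (div_le_div_iff_of_pos_right (pow_pos hκpos _)).2
        linarith

/-- Full high-energy expansion of the coefficient vector q, d = 3 (formula (4.21)),
together with its leading-order particular case. -/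
theorem stmt8 (n : ℕ) (y : Fin n → EuclideanSpace ℝ (Fin 3)) (α : Fin n → ℂ)
    (hy : Function.Injective y) :
    (∀ M : ℕ, ∃ C > (0 : ℝ), ∃ κ₀ > (0 : ℝ), ∀ κ ≥ κ₀, IsUnit (A3 n y α κ) ∧
      ∀ k : EuclideanSpace ℝ (Fin 3), ‖k‖ = κ → ∀ j : Fin n,
        ‖q3 n y α κ k j +
            4 * (Real.pi : ℂ) * Complex.I / (κ : ℂ) *
              ∑ m ∈ Finset.range (M + 1),
                (-4 * (Real.pi : ℂ) * Complex.I) ^ m / (κ : ℂ) ^ m *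
                  ∑ j' : Fin n, (W3 n y α κ ^ m) j j' *
                    Complex.exp (Complex.I * (inner ℝ k (y j') : ℝ))‖ ≤
          C / κ ^ (M + 2)) ∧
    (∃ C > (0 : ℝ), ∃ κ₀ > (0 : ℝ), ∀ κ ≥ κ₀, IsUnit (A3 n y α κ) ∧
      ∀ k : EuclideanSpace ℝ (Fin 3), ‖k‖ = κ → ∀ j : Fin n,
        ‖q3 n y α κ k j +
            4 * (Real.pi : ℂ) * Complex.I / (κ : ℂ) *
              Complex.exp (Complex.I * (inner ℝ k (y j) : ℝ)) +
            16 * (Real.pi : ℂ) ^ 2 / (κ : ℂ) ^ 2 *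
              (α j * Complex.exp (Complex.I * (inner ℝ k (y j) : ℝ)) -
                ∑ j' : Fin n, if j' = j then 0 else
                  Complex.exp (Complex.I * κ * ‖y j - y j'‖) *
                      Complex.exp (Complex.I * (inner ℝ k (y j') : ℝ)) /
                    (4 * (Real.pi : ℂ) * ‖y j - y j'‖))‖ ≤
          C / κ ^ 3) := by
  refine ⟨key n y α, ?_⟩
  obtain ⟨C, hC, κ₀, hκ₀, h⟩ := key n y α 1
  refine ⟨C, hC, κ₀, hκ₀, fun κ hκ => ⟨(h κ hκ).1, fun k hk j => ?_⟩⟩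
  have h2 := (h κ hκ).2 k hk j
  have hκpos : (0 : ℝ) < κ := lt_of_lt_of_le hκ₀ hκ
  have hκ' : (κ : ℂ) ≠ 0 := Complex.ofReal_ne_zero.2 (ne_of_gt hκpos)
  have hπ : (Real.pi : ℂ) ≠ 0 := Complex.ofReal_ne_zero.2 Real.pi_ne_zero
  set e : Fin n → ℂ := fun j' => Complex.exp (Complex.I * (inner ℝ k (y j') : ℝ)) with he
  set Sd : ℂ := ∑ j' : Fin n, if j' = j then 0 else
      Complex.exp (Complex.I * κ * ‖y j - y j'‖) * e j' / (4 * (Real.pi : ℂ) * ‖y j - y j'‖)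
    with hSd
  have hsum0 : ∑ j' : Fin n, (W3 n y α κ ^ 0) j j' * e j' = e j := by
    simp [Matrix.one_apply]
  have hterm : ∀ j' : Fin n, W3 n y α κ j j' * e j' =
      (if j' = j then α j * e j else 0) -
      (if j' = j then 0 else
        Complex.exp (Complex.I * κ * ‖y j - y j'‖) * e j' / (4 * (Real.pi : ℂ) * ‖y j - y j'‖)) := by
    intro j'
    by_cases hjj : j' = j
    · subst hjj; simp [W3]
    · have : ¬ j = j' := fun hh => hjj hh.symm
      simp only [W3, if_neg this, if_neg hjj, sub_zero, zero_sub]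
      ring
  have hsum1 : ∑ j' : Fin n, (W3 n y α κ ^ 1) j j' * e j' = α j * e j - Sd := by
    rw [pow_one, hSd]
    calc ∑ j' : Fin n, W3 n y α κ j j' * e j'
        = ∑ j' : Fin n, ((if j' = j then α j * e j else 0) -
            (if j' = j then 0 else Complex.exp (Complex.I * κ * ‖y j - y j'‖) * e j' /
              (4 * (Real.pi : ℂ) * ‖y j - y j'‖))) :=
          Finset.sum_congr rfl fun j' _ => hterm j'
      _ = (∑ j' : Fin n, if j' = j then α j * e j else 0) -
          ∑ j' : Fin n, (if j' = j then 0 else Complex.exp (Complex.I * κ * ‖y j - y j'‖) * e j' /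
            (4 * (Real.pi : ℂ) * ‖y j - y j'‖)) := by rw [Finset.sum_sub_distrib]
      _ = _ := by rw [Finset.sum_ite_eq' Finset.univ j fun _ => α j * e j]; simp
  have hIπ : 4 * (Real.pi:ℂ) * Complex.I / κ * (-4 * Real.pi * Complex.I / κ)
      = 16 * (Real.pi:ℂ)^2 / κ^2 := by
    field_simp
    ring_nf
    rw [Complex.I_sq]
    ring
  have hE : q3 n y α κ k j +
        4 * (Real.pi : ℂ) * Complex.I / (κ : ℂ) * e j +
        16 * (Real.pi : ℂ) ^ 2 / (κ : ℂ) ^ 2 * (α j * e j - Sd) =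
      q3 n y α κ k j +
        4 * (Real.pi : ℂ) * Complex.I / (κ : ℂ) *
          ∑ m ∈ Finset.range (1 + 1),
            (-4 * (Real.pi : ℂ) * Complex.I) ^ m / (κ : ℂ) ^ m *
              ∑ j' : Fin n, (W3 n y α κ ^ m) j j' * e j' := by
    rw [Finset.sum_range_succ, Finset.sum_range_one, hsum0, hsum1, pow_zero, pow_zero,
      pow_one, pow_one]
    linear_combination (-(α j * e j - Sd)) * hIπ
  rw [show (κ:ℝ)^3 = κ^(1+2) by norm_num]
  calc ‖q3 n y α κ k j + 4 * (Real.pi : ℂ) * Complex.I / (κ : ℂ) * e j +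
        16 * (Real.pi : ℂ) ^ 2 / (κ : ℂ) ^ 2 * (α j * e j - Sd)‖
      = ‖q3 n y α κ k j + 4 * (Real.pi : ℂ) * Complex.I / (κ : ℂ) *
          ∑ m ∈ Finset.range (1 + 1),
            (-4 * (Real.pi : ℂ) * Complex.I) ^ m / (κ : ℂ) ^ m *
              ∑ j' : Fin n, (W3 n y α κ ^ m) j j' * e j'‖ := by rw [hE]
    _ ≤ C / κ ^ (1 + 2) := h2
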